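/- For every n ≥ 1, the set C_n ⊆ ℝ^{2^n−1} of holographic entropy vectors of graph models on n regions is a rational polyhedral convex cone: there exist finitely many vectors v_1,…,v_m ∈ ℝ^{2^n−1} with rational entries such that C_n = { Σ_{j=1}^m λ_j v_j : λ_1,…,λ_m ≥ 0 }. In particular, C_n is closed and is cut out by finitely many homogeneous linear inequalities with integer coefficients. -/

import Mathlib

open Classical

/-- A *graph model* on `n` regions: a finite graph with symmetric nonnegative edge
weights `w` (weight `0` meaning "no edge") and a partial coloring of the vertices by
the `n+1` boundary colors; `color v = none` means `v` is a bulk vertex, color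
`Fin.castSucc i` represents boundary region `i ∈ {1,…,n}` and color `Fin.last n`
represents the purifying region `n+1`. -/
structure GraphModel (n : ℕ) where
  V : Type
  [fintypeV : Fintype V]
  w : V → V → ℝ
  symm : ∀ u v, w u v = w v u
  nonneg : ∀ u v, 0 ≤ w u v
  color : V → Option (Fin (n + 1))

attribute [instance] GraphModel.fintypeV

/-- `|C(W)|`: the total weight of the edges with exactly one endpoint in `W`
(each unordered crossing edge `{u,v}` is counted exactly once, via its ordering
with `u ∈ W` and `v ∉ W`). -/
noncomputable def GraphModel.cutWeight {n : ℕ} (G : GraphModel n) (W : Set G.V) : ℝ :=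
  ∑ u : G.V, ∑ v : G.V, if u ∈ W ∧ v ∉ W then G.w u v else 0

/-- `W` is an `I`-cut: `W` contains precisely the boundary vertices whose color lies
in `I ⊆ {1,…,n}`. -/
def GraphModel.IsCut {n : ℕ} (G : GraphModel n) (I : Finset (Fin n)) (W : Set G.V) : Prop :=
  ∀ v c, G.color v = some c → (v ∈ W ↔ ∃ i ∈ I, Fin.castSucc i = c)

/-- The discrete entropy `S*(I)`: the minimal weight of an `I`-cut. -/
noncomputable def GraphModel.entropy {n : ℕ} (G : GraphModel n) (I : Finset (Fin n)) : ℝ :=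
  sInf (G.cutWeight '' {W | G.IsCut I W})

/-- The holographic entropy vector of a graph model: the collection of all discrete
entropies `S*(I)` of nonempty subsets `I ⊆ {1,…,n}`. -/
noncomputable def GraphModel.entropyVector {n : ℕ} (G : GraphModel n)
    (I : {I : Finset (Fin n) // I.Nonempty}) : ℝ :=
  G.entropy I.1


set_option linter.unusedSectionVars false
noncomputable section HoloCone

variable {ι : Type} [Fintype ι]

/-- real dot product with rational coefficient vector -/
def dotQ (a : ι → ℚ) (x : ι → ℝ) : ℝ := ∑ t, (a t : ℝ) * x t

def coneSet {κ : Type} [Fintype κ] (g : κ → ι → ℚ) : Set (ι → ℝ) :=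
  {x | ∃ lam : κ → ℝ, (∀ j, 0 ≤ lam j) ∧ x = ∑ j, lam j • (fun t => ((g j t : ℝ)))}

def hSet {κ : Type} [Fintype κ] (a : κ → ι → ℚ) : Set (ι → ℝ) :=
  {x | ∀ i, 0 ≤ dotQ (a i) x}

lemma dotQ_add (a : ι → ℚ) (x y : ι → ℝ) : dotQ a (x + y) = dotQ a x + dotQ a y := by
  simp [dotQ, mul_add, Finset.sum_add_distrib]

lemma dotQ_smul (a : ι → ℚ) (c : ℝ) (x : ι → ℝ) : dotQ a (c • x) = c * dotQ a x := by
  simp only [dotQ, Pi.smul_apply, smul_eq_mul, Finset.mul_sum]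
  exact Finset.sum_congr rfl fun t _ => by ring

lemma dotQ_zero (a : ι → ℚ) : dotQ a (0 : ι → ℝ) = 0 := by simp [dotQ]

lemma dotQ_sum (a : ι → ℚ) {κ : Type} [Fintype κ] (f : κ → ι → ℝ) :
    dotQ a (∑ j, f j) = ∑ j, dotQ a (f j) := by
  simp only [dotQ, Finset.sum_apply, Finset.mul_sum]
  exact Finset.sum_comm

lemma dotQ_coe (a : ι → ℚ) (b : ι → ℚ) :
    dotQ a (fun t => ((b t : ℝ))) = ((∑ t, a t * b t : ℚ) : ℝ) := by
  push_cast [dotQ]; rfl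

lemma coneSet_zero_mem {κ : Type} [Fintype κ] (g : κ → ι → ℚ) : (0 : ι → ℝ) ∈ coneSet g :=
  ⟨0, fun _ => le_refl _, by simp⟩

lemma coneSet_add_mem {κ : Type} [Fintype κ] (g : κ → ι → ℚ) {x y : ι → ℝ}
    (hx : x ∈ coneSet g) (hy : y ∈ coneSet g) : x + y ∈ coneSet g := by
  obtain ⟨l1, hl1, rfl⟩ := hx; obtain ⟨l2, hl2, rfl⟩ := hy
  exact ⟨l1 + l2, fun j => add_nonneg (hl1 j) (hl2 j), by
    rw [← Finset.sum_add_distrib]; simp [add_smul]⟩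

lemma coneSet_smul_mem {κ : Type} [Fintype κ] (g : κ → ι → ℚ) {x : ι → ℝ} {c : ℝ}
    (hc : 0 ≤ c) (hx : x ∈ coneSet g) : c • x ∈ coneSet g := by
  obtain ⟨l, hl, rfl⟩ := hx
  exact ⟨fun j => c * l j, fun j => mul_nonneg hc (hl j), by
    rw [Finset.smul_sum]; simp [smul_smul]⟩

lemma coneSet_gen_mem {κ : Type} [Fintype κ] (g : κ → ι → ℚ) (j : κ) :
    (fun t => ((g j t : ℝ))) ∈ coneSet g := by
  refine ⟨fun j' => if j' = j then 1 else 0, fun j' => by positivity, ?_⟩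
  rw [Finset.sum_eq_single j] <;> simp +contextual

lemma coneSet_sum_mem {κ τ : Type} [Fintype κ] [Fintype τ] (g : κ → ι → ℚ)
    (lam : τ → ℝ) (y : τ → ι → ℝ) (hlam : ∀ s, 0 ≤ lam s) (hy : ∀ s, y s ∈ coneSet g) :
    (∑ s, lam s • y s) ∈ coneSet g := by
  classical
  induction (Finset.univ : Finset τ) using Finset.induction with
  | empty => simpa using coneSet_zero_mem g
  | insert _ _ h ih =>
      rw [Finset.sum_insert h]
      exact coneSet_add_mem g (coneSet_smul_mem g (hlam _) (hy _)) ih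

lemma cone_inter_halfspace {κ : Type} [Fintype κ] (g : κ → ι → ℚ) (a : ι → ℚ) :
    ∃ (κ' : Type) (_ : Fintype κ') (g' : κ' → ι → ℚ),
      coneSet g ∩ {x | 0 ≤ dotQ a x} = coneSet g' := by
  set cq : κ → ℚ := fun j => ∑ t, a t * g j t with hcq
  set g' : (κ ⊕ κ × κ) → ι → ℚ :=
    Sum.elim (fun j => if 0 ≤ cq j then g j else 0)
      (fun p => if 0 < cq p.1 ∧ cq p.2 < 0 then cq p.1 • g p.2 - cq p.2 • g p.1 else 0)
    with hg'
  refine ⟨κ ⊕ κ × κ, inferInstance, g', ?_⟩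
  have hginl : ∀ j, (fun t => ((g' (Sum.inl j) t : ℝ))) =
      if 0 ≤ cq j then (fun t => ((g j t : ℝ))) else 0 := by
    intro j; by_cases h : 0 ≤ cq j
    · funext t; simp [hg', h]
    · funext t; simp [hg', h]
  have hginr : ∀ p : κ × κ, (fun t => ((g' (Sum.inr p) t : ℝ))) =
      if 0 < cq p.1 ∧ cq p.2 < 0 then
        ((cq p.1 : ℝ) • (fun t => ((g p.2 t : ℝ))) + (-(cq p.2 : ℝ)) • (fun t => ((g p.1 t : ℝ))))
      else 0 := by
    intro p; by_cases h : 0 < cq p.1 ∧ cq p.2 < 0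
    · funext t; simp [hg', h]; push_cast; ring
    · funext t; simp [hg', h]
  have hcoe : ∀ j, dotQ a (fun t => ((g j t : ℝ))) = ((cq j : ℝ)) := by
    intro j; rw [hcq]; push_cast [dotQ]; rfl
  have hdotsum : ∀ (lam : κ → ℝ), dotQ a (∑ j, lam j • (fun t => ((g j t : ℝ))))
      = ∑ j, lam j * ((cq j : ℝ)) := by
    intro lam
    rw [dotQ_sum]
    exact Finset.sum_congr rfl fun j _ => by rw [dotQ_smul, hcoe]
  ext x
  constructor
  · rintro ⟨⟨lam, hlam, rfl⟩, hx⟩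
    have hdx := hdotsum lam
    set Sm : ℝ := ∑ j, if cq j < 0 then lam j * (-(cq j : ℝ)) else 0 with hSm
    set Sp : ℝ := ∑ j, if 0 < cq j then lam j * ((cq j : ℝ)) else 0 with hSp
    have hsplit : ∑ j, lam j * ((cq j : ℝ)) = Sp - Sm := by
      rw [hSp, hSm, ← Finset.sum_sub_distrib]
      refine Finset.sum_congr rfl fun j _ => ?_
      rcases lt_trichotomy (cq j) 0 with h | h | h
      · simp only [if_neg (not_lt.2 h.le), if_pos h]
        ring
      · simp [h]
      · simp only [if_pos h, if_neg (not_lt.2 h.le)]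
        ring
    have hSm0 : 0 ≤ Sm := Finset.sum_nonneg fun j _ => by
      by_cases h : cq j < 0
      · simp only [if_pos h]
        exact mul_nonneg (hlam j) (by simp only [neg_nonneg]; exact_mod_cast h.le)
      · simp [h]
    have hSp0 : 0 ≤ Sp := Finset.sum_nonneg fun j _ => by
      by_cases h : 0 < cq j
      · simp only [if_pos h]
        exact mul_nonneg (hlam j) (by exact_mod_cast h.le)
      · simp [h]
    have hSmSp : Sm ≤ Sp := by
      have := hx
      simp only [Set.mem_setOf_eq, hdx, hsplit] at this
      linarith
    by_cases hScase : Sm = 0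
    · have hneg : ∀ j, cq j < 0 → lam j = 0 := by
        intro j hj
        have hterms : ∀ k ∈ Finset.univ, (0:ℝ) ≤ if cq k < 0 then lam k * (-(cq k : ℝ)) else 0 := by
          intro k _
          by_cases h : cq k < 0
          · simp only [if_pos h]
            exact mul_nonneg (hlam k) (by simp only [neg_nonneg]; exact_mod_cast h.le)
          · simp [h]
        have h0 := (Finset.sum_eq_zero_iff_of_nonneg hterms).1 hScase j (Finset.mem_univ j)
        rw [if_pos hj] at h0
        have hc : (0:ℝ) < -(cq j : ℝ) := by simp only [neg_pos]; exact_mod_cast hj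
        rcases mul_eq_zero.1 h0 with h | h
        · exact h
        · exact absurd h (ne_of_gt hc)
      refine ⟨Sum.elim (fun j => if 0 ≤ cq j then lam j else 0) 0, ?_, ?_⟩
      · rintro (j | p)
        · dsimp; split
          · exact hlam j
          · exact le_refl 0
        · exact le_refl 0
      · rw [Fintype.sum_sum_type]
        simp only [Sum.elim_inl, Sum.elim_inr, Pi.zero_apply, zero_smul,
          Finset.sum_const_zero, add_zero]
        refine Finset.sum_congr rfl fun j _ => ?_
        rw [hginl j]
        by_cases h : 0 ≤ cq j
        · simp [h]
        · simp [h, hneg j (not_le.1 h)]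
    · have hSmpos : 0 < Sm := lt_of_le_of_ne hSm0 (Ne.symm hScase)
      have hSppos : 0 < Sp := lt_of_lt_of_le hSmpos hSmSp
      have hSpne : Sp ≠ 0 := ne_of_gt hSppos
      set r : ℝ := Sm / Sp with hr
      have hr0 : 0 ≤ r := div_nonneg hSm0 hSp0
      have hr1 : r ≤ 1 := (div_le_one hSppos).2 hSmSp
      refine ⟨Sum.elim
        (fun j => if 0 < cq j then lam j * (1 - r) else if cq j < 0 then 0 else lam j)
        (fun p => if 0 < cq p.1 ∧ cq p.2 < 0 then lam p.1 * lam p.2 / Sp else 0), ?_, ?_⟩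
      · rintro (j | p)
        · dsimp; split
          · exact mul_nonneg (hlam j) (by linarith)
          · split
            · exact le_refl 0
            · exact hlam j
        · dsimp; split
          · exact div_nonneg (mul_nonneg (hlam _) (hlam _)) hSp0
          · exact le_refl 0
      · funext t
        rw [Fintype.sum_sum_type]
        simp only [Finset.sum_apply, Pi.add_apply, Pi.smul_apply, smul_eq_mul,
          Sum.elim_inl, Sum.elim_inr]
        set A : κ → ℝ := fun j => lam j * ((g j t : ℝ)) with hA
        have h1 : ∀ j, (if 0 < cq j then lam j * (1 - r) else if cq j < 0 then 0 else lam j)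
            * ((g' (Sum.inl j) t : ℝ))
            = (if 0 < cq j then (1 - r) * A j else if cq j < 0 then 0 else A j) := by
          intro j
          have hh := congrFun (hginl j) t
          rcases lt_trichotomy (cq j) 0 with h | h | h
          · rw [if_neg (not_le.2 h)] at hh
            rw [if_neg (not_lt.2 h.le), if_pos h, if_neg (not_lt.2 h.le), if_pos h]
            simp
          · rw [if_pos h.ge] at hh
            rw [hh]
            simp [h, hA]
          · rw [if_pos h.le] at hh
            rw [hh, if_pos h, if_pos h, hA]
            dsimp only
            ring
        have h2 : ∀ p : κ × κ, (if 0 < cq p.1 ∧ cq p.2 < 0 then lam p.1 * lam p.2 / Sp else 0)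
            * ((g' (Sum.inr p) t : ℝ))
            = (if 0 < cq p.1 then lam p.1 * ((cq p.1 : ℝ)) else 0)
                * (if cq p.2 < 0 then A p.2 / Sp else 0)
              + (if 0 < cq p.1 then A p.1 / Sp else 0)
                * (if cq p.2 < 0 then lam p.2 * (-(cq p.2 : ℝ)) else 0) := by
          intro p
          have hh := congrFun (hginr p) t
          by_cases h : 0 < cq p.1 ∧ cq p.2 < 0
          · rw [if_pos h] at hh
            simp only [Pi.add_apply, Pi.smul_apply, smul_eq_mul] at hh
            rw [if_pos h, hh, if_pos h.1, if_pos h.2, if_pos h.1, if_pos h.2, hA]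
            dsimp only
            field_simp
          · rw [if_neg h] at hh
            rw [if_neg h, hh]
            rw [not_and_or] at h
            rcases h with h | h
            · simp [if_neg h]
            · simp [if_neg h]
        rw [Finset.sum_congr rfl fun j _ => h1 j, Finset.sum_congr rfl fun p _ => h2 p]
        rw [Finset.sum_add_distrib]
        have hprod : ∀ (F H : κ → ℝ), (∑ p : κ × κ, F p.1 * H p.2)
            = (∑ j, F j) * (∑ k, H k) := by
          intro F H
          rw [Fintype.sum_prod_type, Finset.sum_mul_sum]
        rw [hprod (fun j => if 0 < cq j then lam j * ((cq j : ℝ)) else 0)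
            (fun k => if cq k < 0 then A k / Sp else 0),
          hprod (fun j => if 0 < cq j then A j / Sp else 0)
            (fun k => if cq k < 0 then lam k * (-(cq k : ℝ)) else 0)]
        have hdivN : (∑ k, if cq k < 0 then A k / Sp else 0)
            = (∑ k, if cq k < 0 then A k else 0) / Sp := by
          rw [Finset.sum_div]
          exact Finset.sum_congr rfl fun k _ => by split <;> simp
        have hdivP : (∑ j, if 0 < cq j then A j / Sp else 0)
            = (∑ j, if 0 < cq j then A j else 0) / Sp := by
          rw [Finset.sum_div]
          exact Finset.sum_congr rfl fun k _ => by split <;> simp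
        rw [hdivN, hdivP, ← hSp, ← hSm]
        set TP : ℝ := ∑ j, if 0 < cq j then A j else 0 with hTP
        set TN : ℝ := ∑ j, if cq j < 0 then A j else 0 with hTN
        have e1 : Sp * (TN / Sp) = TN := by field_simp
        have e2 : TP / Sp * Sm = r * TP := by rw [hr]; field_simp
        rw [e1, e2]
        have e3 : r * TP = ∑ j, if 0 < cq j then r * A j else 0 := by
          rw [hTP, Finset.mul_sum]
          exact Finset.sum_congr rfl fun j _ => by split <;> simp
        rw [e3, hTN, ← Finset.sum_add_distrib, ← Finset.sum_add_distrib]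
        refine Finset.sum_congr rfl fun j _ => ?_
        rcases lt_trichotomy (cq j) 0 with h | h | h
        · rw [if_neg (not_lt.2 h.le), if_pos h, if_pos h, if_neg (not_lt.2 h.le)]
          ring
        · simp [h]
        · rw [if_pos h, if_pos h, if_neg (not_lt.2 h.le)]
          ring
  · rintro ⟨lam, hlam, rfl⟩
    constructor
    · refine coneSet_sum_mem g lam _ hlam ?_
      rintro (j | p)
      · rw [hginl j]
        split
        · exact coneSet_gen_mem g j
        · exact coneSet_zero_mem g
      · rw [hginr p]
        split
        · rename_i h
          refine coneSet_add_mem g ?_ ?_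
          · exact coneSet_smul_mem g (by exact_mod_cast h.1.le) (coneSet_gen_mem g p.2)
          · refine coneSet_smul_mem g ?_ (coneSet_gen_mem g p.1)
            simp only [neg_nonneg]
            exact_mod_cast h.2.le
        · exact coneSet_zero_mem g
    · simp only [Set.mem_setOf_eq]
      rw [dotQ_sum]
      refine Finset.sum_nonneg fun s _ => ?_
      rw [dotQ_smul]
      refine mul_nonneg (hlam s) ?_
      rcases s with j | p
      · rw [hginl j]
        split
        · rename_i h
          rw [hcoe j]
          exact_mod_cast h
        · rw [dotQ_zero]
      · rw [hginr p]
        split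
        · rw [dotQ_add, dotQ_smul, dotQ_smul, hcoe, hcoe]
          ring_nf
          exact le_refl 0
        · rw [dotQ_zero]

lemma coneSet_reindex {κ κ' : Type} [Fintype κ] [Fintype κ'] (e : κ' ≃ κ) (g : κ → ι → ℚ) :
    coneSet (g ∘ e) = coneSet g := by
  ext x
  constructor
  · rintro ⟨lam, hlam, rfl⟩
    refine ⟨lam ∘ e.symm, fun j => hlam _, ?_⟩
    rw [← Equiv.sum_comp e (fun j => (lam ∘ e.symm) j • (fun t => ((g j t : ℝ))))]
    exact Finset.sum_congr rfl fun j _ => by simp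
  · rintro ⟨lam, hlam, rfl⟩
    refine ⟨lam ∘ e, fun j => hlam _, ?_⟩
    rw [← Equiv.sum_comp e (fun j => lam j • (fun t => ((g j t : ℝ))))]
    rfl

lemma coneSet_toFin {κ : Type} [Fintype κ] (g : κ → ι → ℚ) :
    ∃ (m : ℕ) (g' : Fin m → ι → ℚ), coneSet g = coneSet g' :=
  ⟨Fintype.card κ, g ∘ (Fintype.equivFin κ).symm,
    (coneSet_reindex (Fintype.equivFin κ).symm g).symm⟩

lemma hSet_reindex {κ κ' : Type} [Fintype κ] [Fintype κ'] (e : κ' ≃ κ) (a : κ → ι → ℚ) :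
    hSet (a ∘ e) = hSet a := by
  ext x
  constructor
  · intro h i
    have := h (e.symm i)
    simpa using this
  · intro h i
    exact h (e i)

lemma hSet_toFin {κ : Type} [Fintype κ] (a : κ → ι → ℚ) :
    ∃ (M : ℕ) (a' : Fin M → ι → ℚ), hSet a = hSet a' :=
  ⟨Fintype.card κ, a ∘ (Fintype.equivFin κ).symm,
    (hSet_reindex (Fintype.equivFin κ).symm a).symm⟩

lemma hSet_univ : hSet (fun _ : Fin 0 => (0 : ι → ℚ)) = Set.univ := by
  ext x
  simp only [hSet, Set.mem_setOf_eq, Set.mem_univ, iff_true]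
  intro i
  exact absurd i.2 (Nat.not_lt_zero _)

lemma univ_coneSet : ∃ (m : ℕ) (g : Fin m → ι → ℚ),
    (Set.univ : Set (ι → ℝ)) = coneSet g := by
  have key : (Set.univ : Set (ι → ℝ)) =
      coneSet (Sum.elim (fun t : ι => Pi.single t (1:ℚ)) (fun t : ι => -Pi.single t (1:ℚ))) := by
    ext x
    simp only [Set.mem_univ, true_iff]
    refine ⟨Sum.elim (fun t => max (x t) 0) (fun t => max (-(x t)) 0), ?_, ?_⟩
    · rintro (t | t) <;> exact le_max_right _ _
    · funext t'
      rw [Finset.sum_apply, Fintype.sum_sum_type]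
      simp only [Sum.elim_inl, Sum.elim_inr, Pi.smul_apply, smul_eq_mul]
      simp only [Pi.neg_apply, Pi.single_apply, apply_ite (fun q : ℚ => (q : ℝ)), Rat.cast_one, Rat.cast_zero,
        Rat.cast_neg, mul_ite, mul_one, mul_zero, mul_neg, Finset.sum_ite_eq,
        Finset.mem_univ, if_true, Finset.sum_neg_distrib]
      rcases le_total (x t') 0 with h | h
      · rw [max_eq_right h, max_eq_left (by linarith)]
        ring
      · rw [max_eq_left h, max_eq_right (by linarith)]
        ring
  obtain ⟨m, g, hg⟩ := coneSet_toFin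
    (Sum.elim (fun t : ι => Pi.single t (1:ℚ)) (fun t : ι => -Pi.single t (1:ℚ)))
  exact ⟨m, g, key.trans hg⟩

/-- Minkowski: every rational H-cone is finitely generated by rational vectors. -/
lemma minkowski : ∀ (M : ℕ) (a : Fin M → ι → ℚ),
    ∃ (m : ℕ) (g : Fin m → ι → ℚ), hSet a = coneSet g := by
  intro M
  induction M with
  | zero =>
      intro a
      obtain ⟨m, g, hg⟩ := (univ_coneSet : ∃ (m : ℕ) (g : Fin m → ι → ℚ), _)
      refine ⟨m, g, ?_⟩
      rw [← hg]
      ext x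
      simp only [hSet, Set.mem_setOf_eq, Set.mem_univ, iff_true]
      intro i
      exact absurd i.2 (Nat.not_lt_zero _)
  | succ M ih =>
      intro a
      have hsplit : hSet a = hSet (fun i : Fin M => a i.succ) ∩ {x | 0 ≤ dotQ (a 0) x} := by
        ext x
        simp only [hSet, Set.mem_inter_iff, Set.mem_setOf_eq]
        rw [Fin.forall_fin_succ]
        tauto
      obtain ⟨m, g, hg⟩ := ih (fun i : Fin M => a i.succ)
      obtain ⟨κ', _, g', hg'⟩ := cone_inter_halfspace g (a 0)
      obtain ⟨m', g'', hg''⟩ := coneSet_toFin g'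
      exact ⟨m', g'', by rw [hsplit, hg, hg', hg'']⟩

lemma dotQ_single (t : ι) (x : ι → ℝ) : dotQ (Pi.single t (1:ℚ)) x = x t := by
  simp [dotQ, Pi.single_apply, apply_ite (fun q : ℚ => (q : ℝ)), ite_mul,
    Finset.sum_ite_eq, Finset.mem_univ]

lemma dotQ_zero_coeff (x : ι → ℝ) : dotQ (0 : ι → ℚ) x = 0 := by simp [dotQ]

lemma dotQ_neg_coeff (a : ι → ℚ) (x : ι → ℝ) : dotQ (-a) x = -dotQ a x := by
  simp [dotQ, Finset.sum_neg_distrib]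

/-- single-variable Fourier–Motzkin elimination over the reals -/
lemma fm1 {κ : Type} [Fintype κ] (γ : κ → ℝ) (d : κ → ℝ) :
    (∃ t : ℝ, ∀ i, 0 ≤ γ i * t + d i) ↔
      ((∀ i, γ i = 0 → 0 ≤ d i) ∧
       ∀ i i', 0 < γ i → γ i' < 0 → 0 ≤ γ i * d i' - γ i' * d i) := by
  constructor
  · rintro ⟨t, ht⟩
    refine ⟨fun i hi => by have := ht i; rwa [hi, zero_mul, zero_add] at this, ?_⟩
    intro i i' hi hi'
    nlinarith [mul_nonneg (neg_nonneg.2 hi'.le) (ht i), mul_nonneg hi.le (ht i')]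
  · rintro ⟨hz, hp⟩
    by_cases hP : (Finset.univ.filter (fun i => 0 < γ i)).Nonempty
    · refine ⟨(Finset.univ.filter (fun i => 0 < γ i)).sup' hP (fun i => -d i / γ i), ?_⟩
      intro i
      rcases lt_trichotomy (γ i) 0 with h | h | h
      · obtain ⟨i₀, hi₀mem, hi₀⟩ :=
          Finset.exists_mem_eq_sup' hP (fun i => -d i / γ i)
        have hγ0 : 0 < γ i₀ := (Finset.mem_filter.1 hi₀mem).2
        have hpair := hp i₀ i hγ0 h
        rw [hi₀]
        have key : γ i * (-d i₀ / γ i₀) + d i = (γ i₀ * d i - γ i * d i₀) / γ i₀ := by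
          field_simp
          ring
        rw [key]
        exact div_nonneg hpair hγ0.le
      · rw [h, zero_mul, zero_add]
        exact hz i h
      · have hmem : i ∈ Finset.univ.filter (fun i => 0 < γ i) :=
          Finset.mem_filter.2 ⟨Finset.mem_univ i, h⟩
        have hle := Finset.le_sup' (fun i => -d i / γ i) hmem
        rw [div_le_iff₀ h] at hle
        nlinarith
    · by_cases hN : (Finset.univ.filter (fun i => γ i < 0)).Nonempty
      · refine ⟨(Finset.univ.filter (fun i => γ i < 0)).inf' hN (fun i => -d i / γ i), ?_⟩
        intro i
        rcases lt_trichotomy (γ i) 0 with h | h | h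
        · have hmem : i ∈ Finset.univ.filter (fun i => γ i < 0) :=
            Finset.mem_filter.2 ⟨Finset.mem_univ i, h⟩
          have hle := Finset.inf'_le (fun i => -d i / γ i) hmem
          rw [le_div_iff_of_neg h] at hle
          nlinarith
        · rw [h, zero_mul, zero_add]
          exact hz i h
        · exact absurd ⟨i, Finset.mem_filter.2 ⟨Finset.mem_univ i, h⟩⟩ hP
      · refine ⟨0, fun i => ?_⟩
        rcases lt_trichotomy (γ i) 0 with h | h | h
        · exact absurd ⟨i, Finset.mem_filter.2 ⟨Finset.mem_univ i, h⟩⟩ hN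
        · rw [h, zero_mul, zero_add]
          exact hz i h
        · exact absurd ⟨i, Finset.mem_filter.2 ⟨Finset.mem_univ i, h⟩⟩ hP

lemma comb_sum {τ : Type} [Fintype τ] (α β : ℝ) (f g z : τ → ℝ) :
    ∑ j, (α * f j - β * g j) * z j = α * (∑ j, f j * z j) - β * (∑ j, g j * z j) := by
  rw [Finset.mul_sum, Finset.mul_sum, ← Finset.sum_sub_distrib]
  exact Finset.sum_congr rfl fun j _ => by ring

/-- Fourier–Motzkin: the projection of a rational H-cone is a rational H-cone. -/
lemma fm_elim : ∀ (k : ℕ) {κ : Type} [Fintype κ] (c : κ → Fin k → ℚ) (a : κ → ι → ℚ),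
    ∃ (M : ℕ) (b : Fin M → ι → ℚ),
      {x : ι → ℝ | ∃ y : Fin k → ℝ, ∀ i, 0 ≤ (∑ j, (c i j : ℝ) * y j) + dotQ (a i) x}
        = hSet b := by
  intro k
  induction k with
  | zero =>
      intro κ _ c a
      obtain ⟨M, b, hb⟩ := hSet_toFin a
      refine ⟨M, b, ?_⟩
      rw [← hb]
      ext x
      simp only [Set.mem_setOf_eq, hSet]
      constructor
      · rintro ⟨y, hy⟩ i
        have := hy i
        simpa using this
      · intro h
        exact ⟨fun j => 0, fun i => by simpa using h i⟩
  | succ k ih =>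
      intro κ _ c a
      set γ : κ → ℚ := fun i => c i 0 with hγ
      set c' : (κ ⊕ κ × κ) → Fin k → ℚ :=
        Sum.elim (fun i => if γ i = 0 then (fun j => c i j.succ) else 0)
          (fun p => if 0 < γ p.1 ∧ γ p.2 < 0 then
              (fun j => γ p.1 * c p.2 j.succ - γ p.2 * c p.1 j.succ) else 0) with hc'
      set a' : (κ ⊕ κ × κ) → ι → ℚ :=
        Sum.elim (fun i => if γ i = 0 then a i else 0)
          (fun p => if 0 < γ p.1 ∧ γ p.2 < 0 then
              (fun t => γ p.1 * a p.2 t - γ p.2 * a p.1 t) else 0) with ha'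
      obtain ⟨M, b, hb⟩ := ih c' a'
      refine ⟨M, b, ?_⟩
      rw [← hb]
      ext x
      simp only [Set.mem_setOf_eq]
      have hrowinl : ∀ (y' : Fin k → ℝ) (i : κ),
          (∑ j, (c' (Sum.inl i) j : ℝ) * y' j) + dotQ (a' (Sum.inl i)) x
          = if γ i = 0 then (∑ j, (c i j.succ : ℝ) * y' j) + dotQ (a i) x else 0 := by
        intro y' i
        by_cases h : γ i = 0
        · simp [hc', ha', h]
        · simp [hc', ha', h, dotQ]
      have hrowinr : ∀ (y' : Fin k → ℝ) (p : κ × κ),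
          (∑ j, (c' (Sum.inr p) j : ℝ) * y' j) + dotQ (a' (Sum.inr p)) x
          = if 0 < γ p.1 ∧ γ p.2 < 0 then
              ((γ p.1 : ℝ) * ((∑ j, (c p.2 j.succ : ℝ) * y' j) + dotQ (a p.2) x)
                - (γ p.2 : ℝ) * ((∑ j, (c p.1 j.succ : ℝ) * y' j) + dotQ (a p.1) x))
            else 0 := by
        intro y' p
        by_cases h : 0 < γ p.1 ∧ γ p.2 < 0
        · rw [if_pos h]
          simp only [hc', ha', Sum.elim_inr, if_pos h, dotQ]
          push_cast
          rw [comb_sum, comb_sum]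
          ring
        · rw [if_neg h]
          simp [hc', ha', h, dotQ]
      constructor
      · rintro ⟨y, hy⟩
        refine ⟨fun j => y j.succ, ?_⟩
        have hsplit : ∀ i, (∑ j : Fin (k+1), (c i j : ℝ) * y j)
            = (γ i : ℝ) * y 0 + ∑ j : Fin k, (c i j.succ : ℝ) * y j.succ := by
          intro i
          rw [Fin.sum_univ_succ]
        have hfm := (fm1 (fun i => ((γ i : ℝ))) (fun i =>
            (∑ j : Fin k, (c i j.succ : ℝ) * y j.succ) + dotQ (a i) x)).1
          ⟨y 0, fun i => by
            have := hy i
            rw [hsplit i] at this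
            linarith⟩
        rintro (i | p)
        · rw [hrowinl]
          by_cases h : γ i = 0
          · rw [if_pos h]
            exact hfm.1 i (by exact_mod_cast h)
          · rw [if_neg h]
        · rw [hrowinr]
          by_cases h : 0 < γ p.1 ∧ γ p.2 < 0
          · rw [if_pos h]
            exact hfm.2 p.1 p.2 (by exact_mod_cast h.1) (by exact_mod_cast h.2)
          · rw [if_neg h]
      · rintro ⟨y', hy'⟩
        have hz : ∀ i, (γ i : ℝ) = 0 →
            0 ≤ (∑ j, (c i j.succ : ℝ) * y' j) + dotQ (a i) x := by
          intro i hi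
          have := hy' (Sum.inl i)
          rw [hrowinl] at this
          rwa [if_pos (by exact_mod_cast hi)] at this
        have hp : ∀ i i', 0 < (γ i : ℝ) → (γ i' : ℝ) < 0 →
            0 ≤ (γ i : ℝ) * ((∑ j, (c i' j.succ : ℝ) * y' j) + dotQ (a i') x)
              - (γ i' : ℝ) * ((∑ j, (c i j.succ : ℝ) * y' j) + dotQ (a i) x) := by
          intro i i' hi hi'
          have := hy' (Sum.inr (i, i'))
          rw [hrowinr] at this
          rwa [if_pos ⟨by exact_mod_cast hi, by exact_mod_cast hi'⟩] at this
        obtain ⟨t, ht⟩ := (fm1 (fun i => ((γ i : ℝ))) (fun i =>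
            (∑ j, (c i j.succ : ℝ) * y' j) + dotQ (a i) x)).2 ⟨hz, hp⟩
        refine ⟨Fin.cons t y', fun i => ?_⟩
        have hsplit : (∑ j : Fin (k+1), (c i j : ℝ) * (Fin.cons t y' : Fin (k+1) → ℝ) j)
            = (γ i : ℝ) * t + ∑ j : Fin k, (c i j.succ : ℝ) * y' j := by
          rw [Fin.sum_univ_succ]
          simp only [Fin.cons_zero, Fin.cons_succ]
          rfl
        rw [hsplit]
        have := ht i
        linarith

/-- Weyl: a finitely generated rational cone is a rational H-cone. -/
lemma weyl {m : ℕ} (g : Fin m → ι → ℚ) :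
    ∃ (M : ℕ) (b : Fin M → ι → ℚ), coneSet g = hSet b := by
  set c : (Fin m ⊕ (ι ⊕ ι)) → Fin m → ℚ :=
    Sum.elim (fun j' => Pi.single j' 1)
      (Sum.elim (fun t => fun j => -(g j t)) (fun t => fun j => g j t)) with hc
  set a : (Fin m ⊕ (ι ⊕ ι)) → ι → ℚ :=
    Sum.elim (fun _ => 0)
      (Sum.elim (fun t => Pi.single t 1) (fun t => -Pi.single t 1)) with ha
  obtain ⟨M, b, hb⟩ := fm_elim m c a
  refine ⟨M, b, ?_⟩
  rw [← hb]
  ext x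
  simp only [Set.mem_setOf_eq, coneSet]
  have hsingle : ∀ (y : Fin m → ℝ) (j' : Fin m),
      (∑ j, ((Pi.single j' (1:ℚ) : Fin m → ℚ) j : ℝ) * y j) = y j' := by
    intro y j'
    simp [Pi.single_apply, apply_ite (fun q : ℚ => (q : ℝ)), ite_mul,
      Finset.sum_ite_eq, Finset.mem_univ]
  constructor
  · rintro ⟨lam, hlam, rfl⟩
    refine ⟨lam, ?_⟩
    rintro (j' | (t | t))
    · simp only [hc, ha, Sum.elim_inl]
      rw [hsingle, dotQ_zero_coeff, add_zero]
      exact hlam j'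
    · simp only [hc, ha, Sum.elim_inr, Sum.elim_inl]
      rw [dotQ_single]
      have : (∑ j : Fin m, lam j • (fun t => ((g j t : ℝ)))) t
          = ∑ j : Fin m, (g j t : ℝ) * lam j := by
        rw [Finset.sum_apply]
        exact Finset.sum_congr rfl fun j _ => by simp [mul_comm]
      rw [this]
      push_cast
      rw [← Finset.sum_add_distrib]
      simp
    · simp only [hc, ha, Sum.elim_inr]
      rw [dotQ_neg_coeff, dotQ_single]
      have : (∑ j : Fin m, lam j • (fun t => ((g j t : ℝ)))) t
          = ∑ j : Fin m, (g j t : ℝ) * lam j := by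
        rw [Finset.sum_apply]
        exact Finset.sum_congr rfl fun j _ => by simp [mul_comm]
      rw [this]
      simp
  · rintro ⟨y, hy⟩
    refine ⟨y, ?_, ?_⟩
    · intro j'
      have := hy (Sum.inl j')
      simp only [hc, ha, Sum.elim_inl] at this
      rwa [hsingle, dotQ_zero_coeff, add_zero] at this
    · funext t
      have h1 := hy (Sum.inr (Sum.inl t))
      have h2 := hy (Sum.inr (Sum.inr t))
      simp only [hc, ha, Sum.elim_inr, Sum.elim_inl] at h1 h2
      rw [dotQ_single] at h1
      rw [dotQ_neg_coeff, dotQ_single] at h2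
      have hs : (∑ j : Fin m, y j • (fun t => ((g j t : ℝ)))) t
          = ∑ j : Fin m, (g j t : ℝ) * y j := by
        rw [Finset.sum_apply]
        exact Finset.sum_congr rfl fun j _ => by simp [mul_comm]
      rw [hs]
      have e1 : (∑ j : Fin m, ((-(g j t) : ℚ) : ℝ) * y j) = -∑ j : Fin m, (g j t : ℝ) * y j := by
        rw [← Finset.sum_neg_distrib]
        exact Finset.sum_congr rfl fun j _ => by push_cast; ring
      rw [e1] at h1
      linarith [h2, h1]

/-- clearing denominators: a rational H-set is an integer H-set -/
lemma hSet_to_int {M : ℕ} (b : Fin M → ι → ℚ) :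
    ∃ cz : Fin M → ι → ℤ,
      hSet b = {x : ι → ℝ | ∀ i, 0 ≤ ∑ t, (cz i t : ℝ) * x t} := by
  have hq : ∀ q : ℚ, (q.num : ℚ) = q * (q.den : ℚ) := by
    intro q
    have hd : ((q.den : ℚ)) ≠ 0 := by
      exact_mod_cast q.den_nz
    have hnd := Rat.num_div_den q
    rw [div_eq_iff hd] at hnd
    exact hnd
  set D : Fin M → ℤ := fun i => ∏ t, ((b i t).den : ℤ) with hD
  have hDpos : ∀ i, 0 < D i := fun i => Finset.prod_pos fun t _ => by
    exact_mod_cast (b i t).pos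
  refine ⟨fun i t => (b i t).num * (D i / ((b i t).den : ℤ)), ?_⟩
  have hco : ∀ (i : Fin M) (t : ι),
      (((b i t).num * (D i / ((b i t).den : ℤ)) : ℤ) : ℝ) = (b i t : ℝ) * (D i : ℝ) := by
    intro i t
    obtain ⟨e, he⟩ : ((b i t).den : ℤ) ∣ D i := Finset.dvd_prod_of_mem _ (Finset.mem_univ t)
    have hden : ((b i t).den : ℤ) ≠ 0 := by exact_mod_cast (b i t).den_nz
    rw [he, Int.mul_ediv_cancel_left _ hden]
    have hQ : (((b i t).num * e : ℤ) : ℚ) = b i t * ((((b i t).den : ℤ) * e : ℤ) : ℚ) := by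
      push_cast
      rw [hq (b i t)]
      push_cast
      ring
    have := congrArg (fun q : ℚ => (q : ℝ)) hQ
    push_cast at this ⊢
    rw [this]
  ext x
  simp only [hSet, Set.mem_setOf_eq, dotQ]
  refine forall_congr' fun i => ?_
  have hsum : (∑ t, (((b i t).num * (D i / ((b i t).den : ℤ)) : ℤ) : ℝ) * x t)
      = (D i : ℝ) * ∑ t, (b i t : ℝ) * x t := by
    rw [Finset.mul_sum]
    refine Finset.sum_congr rfl fun t _ => ?_
    rw [hco i t]
    ring
  rw [hsum]
  have hD' : (0:ℝ) < (D i : ℝ) := by exact_mod_cast hDpos i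
  constructor
  · intro h
    exact mul_nonneg hD'.le h
  · intro h
    exact (mul_nonneg_iff_of_pos_left hD').1 h

end HoloCone


section Graphs

variable {n : ℕ}

lemma GraphModel.cut_nonempty (G : GraphModel n) (I : Finset (Fin n)) :
    {W : Set G.V | G.IsCut I W}.Nonempty := by
  refine ⟨{v | ∃ i ∈ I, G.color v = some (Fin.castSucc i)}, ?_⟩
  intro v c hc
  simp only [Set.mem_setOf_eq]
  constructor
  · rintro ⟨i, hi, hci⟩
    rw [hc] at hci
    exact ⟨i, hi, (Option.some.inj hci).symm⟩
  · rintro ⟨i, hi, hci⟩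
    exact ⟨i, hi, by rw [hc, hci]⟩

lemma GraphModel.exists_min_cut (G : GraphModel n) (I : Finset (Fin n)) :
    ∃ W, G.IsCut I W ∧ G.cutWeight W = G.entropy I ∧
      ∀ W', G.IsCut I W' → G.entropy I ≤ G.cutWeight W' := by
  have hne : (G.cutWeight '' {W | G.IsCut I W}).Nonempty := (G.cut_nonempty I).image _
  have hfin : (G.cutWeight '' {W | G.IsCut I W}).Finite := (Set.toFinite _).image _
  obtain ⟨W, hW, hWeq⟩ := hne.csInf_mem hfin
  exact ⟨W, hW, hWeq, fun W' hW' => csInf_le hfin.bddBelow ⟨W', hW', rfl⟩⟩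

/-- the empty graph model -/
def zeroModel (n : ℕ) : GraphModel n :=
  { V := Empty, fintypeV := inferInstance, w := fun v => v.elim,
    symm := fun u => u.elim, nonneg := fun u => u.elim, color := fun v => v.elim }

lemma zeroModel_entropyVector : (zeroModel n).entropyVector = 0 := by
  funext I
  show (zeroModel n).entropy I.1 = 0
  unfold GraphModel.entropy
  have h1 : (zeroModel n).cutWeight '' {W | (zeroModel n).IsCut I.1 W} = {0} := by
    ext r
    constructor
    · rintro ⟨W, _, rfl⟩
      simp [GraphModel.cutWeight, zeroModel]
      exact Finset.sum_eq_zero fun u _ => Empty.elim u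
    · rintro rfl
      refine ⟨∅, fun v => v.elim, ?_⟩
      simp [GraphModel.cutWeight, zeroModel]
      exact Finset.sum_eq_zero fun u _ => Empty.elim u
  rw [h1, csInf_singleton]

/-- scaling a graph model -/
def smulModel (G : GraphModel n) (c : ℝ) (hc : 0 ≤ c) : GraphModel n where
  V := G.V
  fintypeV := G.fintypeV
  w := fun u v => c * G.w u v
  symm := by
    intro u v
    show c * G.w u v = c * G.w v u
    rw [G.symm u v]
  nonneg := fun u v => mul_nonneg hc (G.nonneg u v)
  color := G.color

lemma smul_entropyVector (G : GraphModel n) (c : ℝ) (hc : 0 ≤ c) :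
    ∃ G' : GraphModel n, G'.entropyVector = c • G.entropyVector := by
  refine ⟨smulModel G c hc, ?_⟩
  set G' : GraphModel n := smulModel G c hc with hG'
  funext I
  have hcw : ∀ W : Set G.V, G'.cutWeight W = c * G.cutWeight W := by
    intro W
    show (∑ u : G.V, ∑ v : G.V, if u ∈ W ∧ v ∉ W then c * G.w u v else 0) = _
    unfold GraphModel.cutWeight
    rw [Finset.mul_sum]
    refine Finset.sum_congr rfl fun u _ => ?_
    rw [Finset.mul_sum]
    refine Finset.sum_congr rfl fun v _ => ?_
    split
    · rfl
    · rw [mul_zero]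
  obtain ⟨W, hW, hWeq, hmin⟩ := G.exists_min_cut I.1
  obtain ⟨W', hW', hWeq', hmin'⟩ := G'.exists_min_cut I.1
  show G'.entropy I.1 = c * G.entropy I.1
  apply le_antisymm
  · calc G'.entropy I.1 ≤ G'.cutWeight W := hmin' W hW
    _ = c * G.cutWeight W := hcw W
    _ = c * G.entropy I.1 := by rw [hWeq]
  · calc c * G.entropy I.1 ≤ c * G.cutWeight W' :=
        mul_le_mul_of_nonneg_left (hmin W' hW') hc
    _ = G'.cutWeight W' := (hcw W').symm
    _ = G'.entropy I.1 := hWeq'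

/-- disjoint union of graph models -/
def addModel (G₁ G₂ : GraphModel n) : GraphModel n where
  V := G₁.V ⊕ G₂.V
  fintypeV := inferInstance
  w := fun u v => match u, v with
    | .inl a, .inl b => G₁.w a b
    | .inr a, .inr b => G₂.w a b
    | _, _ => 0
  symm := by
    rintro (a | a) (b | b)
    · exact G₁.symm a b
    · rfl
    · rfl
    · exact G₂.symm a b
  nonneg := by
    rintro (a | a) (b | b)
    · exact G₁.nonneg a b
    · exact le_refl 0
    · exact le_refl 0
    · exact G₂.nonneg a b
  color := Sum.elim G₁.color G₂.color

lemma addModel_cutWeight (G₁ G₂ : GraphModel n) (W : Set (G₁.V ⊕ G₂.V)) :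
    (addModel G₁ G₂).cutWeight W
      = G₁.cutWeight (Sum.inl ⁻¹' W) + G₂.cutWeight (Sum.inr ⁻¹' W) := by
  show (∑ u : G₁.V ⊕ G₂.V, ∑ v : G₁.V ⊕ G₂.V,
      if u ∈ W ∧ v ∉ W then (addModel G₁ G₂).w u v else 0) = _
  unfold GraphModel.cutWeight
  rw [Fintype.sum_sum_type]
  have h1 : ∀ a : G₁.V, (∑ v : G₁.V ⊕ G₂.V,
      if Sum.inl a ∈ W ∧ v ∉ W then (addModel G₁ G₂).w (Sum.inl a) v else 0)
      = ∑ b : G₁.V, if a ∈ Sum.inl ⁻¹' W ∧ b ∉ Sum.inl ⁻¹' W then G₁.w a b else 0 := by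
    intro a
    rw [Fintype.sum_sum_type]
    have hz : (∑ b : G₂.V,
        if Sum.inl a ∈ W ∧ Sum.inr b ∉ W then (addModel G₁ G₂).w (Sum.inl a) (Sum.inr b) else 0)
        = 0 := by
      refine Finset.sum_eq_zero fun b _ => ?_
      have hw : (addModel G₁ G₂).w (Sum.inl a) (Sum.inr b) = 0 := rfl
      rw [hw, ite_self]
    rw [hz, add_zero]
    rfl
  have h2 : ∀ a : G₂.V, (∑ v : G₁.V ⊕ G₂.V,
      if Sum.inr a ∈ W ∧ v ∉ W then (addModel G₁ G₂).w (Sum.inr a) v else 0)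
      = ∑ b : G₂.V, if a ∈ Sum.inr ⁻¹' W ∧ b ∉ Sum.inr ⁻¹' W then G₂.w a b else 0 := by
    intro a
    rw [Fintype.sum_sum_type]
    have hz : (∑ b : G₁.V,
        if Sum.inr a ∈ W ∧ Sum.inl b ∉ W then (addModel G₁ G₂).w (Sum.inr a) (Sum.inl b) else 0)
        = 0 := by
      refine Finset.sum_eq_zero fun b _ => ?_
      have hw : (addModel G₁ G₂).w (Sum.inr a) (Sum.inl b) = 0 := rfl
      rw [hw, ite_self]
    rw [hz, zero_add]
    rfl
  rw [Finset.sum_congr rfl fun a _ => h1 a, Finset.sum_congr rfl fun a _ => h2 a]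

lemma addModel_isCut (G₁ G₂ : GraphModel n) (I : Finset (Fin n)) (W : Set (G₁.V ⊕ G₂.V)) :
    (addModel G₁ G₂).IsCut I W
      ↔ G₁.IsCut I (Sum.inl ⁻¹' W) ∧ G₂.IsCut I (Sum.inr ⁻¹' W) := by
  constructor
  · intro h
    exact ⟨fun v c hc => h (Sum.inl v) c hc, fun v c hc => h (Sum.inr v) c hc⟩
  · rintro ⟨h1, h2⟩ (v | v) c hc
    · exact h1 v c hc
    · exact h2 v c hc

lemma add_entropyVector (G₁ G₂ : GraphModel n) :
    ∃ G : GraphModel n, G.entropyVector = G₁.entropyVector + G₂.entropyVector := by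
  refine ⟨addModel G₁ G₂, ?_⟩
  funext I
  show (addModel G₁ G₂).entropy I.1 = G₁.entropy I.1 + G₂.entropy I.1
  obtain ⟨W₁, hW₁, he₁, hm₁⟩ := G₁.exists_min_cut I.1
  obtain ⟨W₂, hW₂, he₂, hm₂⟩ := G₂.exists_min_cut I.1
  obtain ⟨Wm, hWm, hem, hmm⟩ := (addModel G₁ G₂).exists_min_cut I.1
  apply le_antisymm
  · set W : Set (G₁.V ⊕ G₂.V) := Sum.inl '' W₁ ∪ Sum.inr '' W₂ with hWdef
    have hpre1 : Sum.inl ⁻¹' W = W₁ := by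
      ext v
      simp [hWdef]
    have hpre2 : Sum.inr ⁻¹' W = W₂ := by
      ext v
      simp [hWdef]
    have hcut : (addModel G₁ G₂).IsCut I.1 W := by
      rw [addModel_isCut, hpre1, hpre2]
      exact ⟨hW₁, hW₂⟩
    calc (addModel G₁ G₂).entropy I.1 ≤ (addModel G₁ G₂).cutWeight W := hmm W hcut
      _ = G₁.cutWeight W₁ + G₂.cutWeight W₂ := by
          rw [addModel_cutWeight, hpre1, hpre2]
      _ = G₁.entropy I.1 + G₂.entropy I.1 := by rw [he₁, he₂]
  · rw [← hem, addModel_cutWeight G₁ G₂ Wm]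
    obtain ⟨hc1, hc2⟩ := (addModel_isCut G₁ G₂ I.1 Wm).1 hWm
    exact add_le_add (hm₁ _ hc1) (hm₂ _ hc2)

/-- the entropy cone is closed under nonnegative combinations -/
lemma entropy_cone_sum {τ : Type} [Fintype τ] (lam : τ → ℝ) (hlam : ∀ j, 0 ≤ lam j)
    (v : τ → ({I : Finset (Fin n) // I.Nonempty} → ℝ))
    (hv : ∀ j, ∃ G : GraphModel n, G.entropyVector = v j) :
    ∃ G : GraphModel n, G.entropyVector = ∑ j, lam j • v j := by
  classical
  induction (Finset.univ : Finset τ) using Finset.induction with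
  | empty =>
      refine ⟨zeroModel n, ?_⟩
      rw [Finset.sum_empty, zeroModel_entropyVector]
  | @insert j s hj ih =>
      obtain ⟨G₀, hG₀⟩ := ih
      obtain ⟨Gj, hGj⟩ := hv j
      obtain ⟨Gjs, hGjs⟩ := smul_entropyVector Gj (lam j) (hlam j)
      obtain ⟨G, hG⟩ := add_entropyVector Gjs G₀
      refine ⟨G, ?_⟩
      rw [Finset.sum_insert hj, hG, hGjs, hGj, hG₀]

end Graphs

section Reduction

variable {n : ℕ}

/-- the fixed vertex type -/
def V0 (n : ℕ) : Type := ({I : Finset (Fin n) // I.Nonempty} → Bool) × Option (Fin (n + 1))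

instance : Fintype (V0 n) :=
  inferInstanceAs (Fintype (({I : Finset (Fin n) // I.Nonempty} → Bool) × Option (Fin (n + 1))))

instance : DecidableEq (V0 n) :=
  inferInstanceAs (DecidableEq (({I : Finset (Fin n) // I.Nonempty} → Bool) × Option (Fin (n + 1))))

/-- the fixed coloring of `V0` -/
noncomputable def color0 (n : ℕ) (a : V0 n) : Option (Fin (n + 1)) :=
  Option.casesOn a.2 none (fun c =>
    if (∀ I' : {I : Finset (Fin n) // I.Nonempty},
        (a.1 I' = true ↔ ∃ i ∈ I'.1, Fin.castSucc i = c)) then some c else none)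

lemma color0_none (f : {I : Finset (Fin n) // I.Nonempty} → Bool) :
    color0 n (f, none) = none := rfl

lemma color0_some (f : {I : Finset (Fin n) // I.Nonempty} → Bool) (c : Fin (n + 1)) :
    color0 n (f, some c)
      = if (∀ I' : {I : Finset (Fin n) // I.Nonempty},
          (f I' = true ↔ ∃ i ∈ I'.1, Fin.castSucc i = c)) then some c else none := rfl

/-- graph models on the fixed vertex set with the fixed coloring -/
noncomputable def mkModel (w : V0 n → V0 n → ℝ) (hsym : ∀ u v, w u v = w v u)
    (hnn : ∀ u v, 0 ≤ w u v) : GraphModel n where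
  V := V0 n
  fintypeV := inferInstance
  w := w
  symm := hsym
  nonneg := hnn
  color := color0 n

/-- every entropy vector is realized on the fixed vertex set with the fixed coloring -/
lemma reduction (G : GraphModel n) :
    ∃ (w : V0 n → V0 n → ℝ) (hsym : ∀ u v, w u v = w v u) (hnn : ∀ u v, 0 ≤ w u v),
      (mkModel w hsym hnn).entropyVector = G.entropyVector := by
  choose Wmin hcut hweq hmin using G.exists_min_cut
  set φ : G.V → V0 n := fun v =>
    (fun J : {I : Finset (Fin n) // I.Nonempty} => if v ∈ Wmin J.1 then true else false,
      G.color v) with hφ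
  set w' : V0 n → V0 n → ℝ := fun a b =>
    ∑ u : G.V, ∑ v : G.V, if φ u = a ∧ φ v = b then G.w u v else 0 with hw'
  have hsym : ∀ a b, w' a b = w' b a := by
    intro a b
    rw [hw']
    dsimp only
    rw [Finset.sum_comm]
    refine Finset.sum_congr rfl fun v _ => Finset.sum_congr rfl fun u _ => ?_
    exact if_congr and_comm (G.symm u v) rfl
  have hnn : ∀ a b, 0 ≤ w' a b := by
    intro a b
    refine Finset.sum_nonneg fun u _ => Finset.sum_nonneg fun v _ => ?_
    split
    · exact G.nonneg u v
    · exact le_refl 0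
  refine ⟨w', hsym, hnn, ?_⟩
  set G' := mkModel w' hsym hnn with hG'
  -- key A : cut weights pull back
  have keyA : ∀ W' : Set (V0 n), G'.cutWeight W' = G.cutWeight (φ ⁻¹' W') := by
    intro W'
    show (∑ a : V0 n, ∑ b : V0 n, if a ∈ W' ∧ b ∉ W' then w' a b else 0)
      = ∑ u : G.V, ∑ v : G.V, if u ∈ φ ⁻¹' W' ∧ v ∉ φ ⁻¹' W' then G.w u v else 0
    rw [← Fintype.sum_prod_type (f := fun p : V0 n × V0 n =>
      if p.1 ∈ W' ∧ p.2 ∉ W' then w' p.1 p.2 else 0)]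
    rw [← Fintype.sum_prod_type (f := fun q : G.V × G.V =>
      if q.1 ∈ φ ⁻¹' W' ∧ q.2 ∉ φ ⁻¹' W' then G.w q.1 q.2 else 0)]
    have step1 : ∀ p : V0 n × V0 n,
        (if p.1 ∈ W' ∧ p.2 ∉ W' then w' p.1 p.2 else 0)
        = ∑ q : G.V × G.V,
            if (p.1 ∈ W' ∧ p.2 ∉ W') ∧ (φ q.1 = p.1 ∧ φ q.2 = p.2) then G.w q.1 q.2 else 0 := by
      intro p
      by_cases hp : p.1 ∈ W' ∧ p.2 ∉ W'
      · rw [if_pos hp, hw']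
        dsimp only
        rw [← Fintype.sum_prod_type (f := fun q : G.V × G.V =>
          if φ q.1 = p.1 ∧ φ q.2 = p.2 then G.w q.1 q.2 else 0)]
        exact Finset.sum_congr rfl fun q _ =>
          (if_congr (and_iff_right hp) rfl rfl).symm
      · rw [if_neg hp]
        refine (Finset.sum_eq_zero fun q _ => ?_).symm
        rw [if_neg (fun h => hp h.1)]
    rw [Finset.sum_congr rfl fun p _ => step1 p]
    rw [Finset.sum_comm]
    refine Finset.sum_congr rfl fun q _ => ?_
    rw [Finset.sum_eq_single (φ q.1, φ q.2)]
    · have hmem : (q.1 ∈ φ ⁻¹' W' ∧ q.2 ∉ φ ⁻¹' W') ↔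
          ((φ q.1, φ q.2).1 ∈ W' ∧ (φ q.1, φ q.2).2 ∉ W') ∧ (φ q.1 = (φ q.1, φ q.2).1 ∧ φ q.2 = (φ q.1, φ q.2).2) := by
        simp [Set.mem_preimage]
      rw [if_congr hmem.symm rfl rfl]
    · intro p _ hne
      refine if_neg fun h => hne ?_
      rw [h.2.1, h.2.2]
    · intro h
      exact absurd (Finset.mem_univ _) h
  -- key B : colors are preserved
  have keyB : ∀ v : G.V, color0 n (φ v) = G.color v := by
    intro v
    rcases hc : G.color v with _ | c
    · show color0 n (_, G.color v) = none
      rw [hc, color0_none]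
    · show color0 n (_, G.color v) = some c
      rw [hc, color0_some, if_pos]
      intro I'
      constructor
      · intro h
        by_cases hv : v ∈ Wmin I'.1
        · exact (hcut I'.1 v c hc).1 hv
        · rw [if_neg hv] at h
          exact absurd h (by simp)
      · intro h
        rw [if_pos ((hcut I'.1 v c hc).2 h)]
  -- key C : cuts pull back
  have keyC : ∀ (I : Finset (Fin n)) (W' : Set (V0 n)),
      G'.IsCut I W' → G.IsCut I (φ ⁻¹' W') := by
    intro I W' h v c hc
    refine h (φ v) c ?_
    show color0 n (φ v) = some c
    rw [keyB v, hc]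
  -- the distinguished cut of G'
  have keyD : ∀ (I : Finset (Fin n)) (hI : I.Nonempty),
      G'.IsCut I {a : V0 n | a.1 ⟨I, hI⟩ = true}
        ∧ φ ⁻¹' {a : V0 n | a.1 ⟨I, hI⟩ = true} = Wmin I := by
    intro I hI
    constructor
    · rintro ⟨f, o⟩ c hca
      replace hca : color0 n (f, o) = some c := hca
      rcases o with _ | c'
      · rw [color0_none] at hca
        exact absurd hca (by simp)
      · rw [color0_some] at hca
        by_cases hcond : ∀ I' : {I : Finset (Fin n) // I.Nonempty},
            (f I' = true ↔ ∃ i ∈ I'.1, Fin.castSucc i = c')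
        · rw [if_pos hcond] at hca
          have hcc : c' = c := Option.some.inj hca
          subst hcc
          exact hcond ⟨I, hI⟩
        · rw [if_neg hcond] at hca
          exact absurd hca (by simp)
    · ext v
      simp only [Set.mem_preimage, Set.mem_setOf_eq, hφ]
      by_cases hv : v ∈ Wmin I
      · simp [hv]; exact decide_eq_true hv
      · simp [hv]; exact fun h => hv (of_decide_eq_true h)
  funext I
  show G'.entropy I.1 = G.entropy I.1
  obtain ⟨U, hU, hUeq, hUmin⟩ := G'.exists_min_cut I.1
  obtain ⟨hcutD, hpreD⟩ := keyD I.1 I.2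
  apply le_antisymm
  · calc G'.entropy I.1 ≤ G'.cutWeight {a : V0 n | a.1 ⟨I.1, I.2⟩ = true} := hUmin _ hcutD
      _ = G.cutWeight (φ ⁻¹' {a : V0 n | a.1 ⟨I.1, I.2⟩ = true}) := keyA _
      _ = G.cutWeight (Wmin I.1) := by rw [hpreD]
      _ = G.entropy I.1 := hweq I.1
  · calc G.entropy I.1 ≤ G.cutWeight (φ ⁻¹' U) := hmin I.1 _ (keyC I.1 U hU)
      _ = G'.cutWeight U := (keyA U).symm
      _ = G'.entropy I.1 := hUeq

end Reduction

section Cells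

variable {n : ℕ}

def SelT (n : ℕ) := {I : Finset (Fin n) // I.Nonempty} → (V0 n → Bool)

instance : Fintype (SelT n) :=
  inferInstanceAs (Fintype ({I : Finset (Fin n) // I.Nonempty} → (V0 n → Bool)))

def cutOf (s : V0 n → Bool) : Set (V0 n) := {v | s v = true}

def IsCut0 (n : ℕ) (I : Finset (Fin n)) (W : Set (V0 n)) : Prop :=
  ∀ v c, color0 n v = some c → (v ∈ W ↔ ∃ i ∈ I, Fin.castSucc i = c)

lemma isCut_mkModel (w : V0 n → V0 n → ℝ) (hsym : ∀ u v, w u v = w v u)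
    (hnn : ∀ u v, 0 ≤ w u v) (I : Finset (Fin n)) (W : Set (V0 n)) :
    (mkModel w hsym hnn).IsCut I W ↔ IsCut0 n I W := Iff.rfl

noncomputable def chi (W : Set (V0 n)) : V0 n × V0 n → ℚ :=
  fun p => if p.1 ∈ W ∧ p.2 ∉ W then 1 else 0

lemma cutWeight_eq_dot (w : V0 n → V0 n → ℝ) (hsym : ∀ u v, w u v = w v u)
    (hnn : ∀ u v, 0 ≤ w u v) (ρ : V0 n × V0 n → ℝ)
    (hwρ : ∀ u v, w u v = ρ (u, v)) (W : Set (V0 n)) :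
    (mkModel w hsym hnn).cutWeight W = dotQ (chi W) ρ := by
  show (∑ u : V0 n, ∑ v : V0 n, if u ∈ W ∧ v ∉ W then w u v else 0) = _
  rw [← Fintype.sum_prod_type
    (f := fun p : V0 n × V0 n => if p.1 ∈ W ∧ p.2 ∉ W then w p.1 p.2 else 0)]
  unfold dotQ
  refine Finset.sum_congr rfl fun p _ => ?_
  rw [hwρ p.1 p.2]
  by_cases h : p.1 ∈ W ∧ p.2 ∉ W
  · rw [if_pos h]
    simp [chi, h]
  · rw [if_neg h]
    simp [chi, h]

noncomputable def rowsCells (σ : SelT n) :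
    ((V0 n × V0 n) ⊕ ((V0 n × V0 n) ⊕ ({I : Finset (Fin n) // I.Nonempty} × (V0 n → Bool))))
      → (V0 n × V0 n) → ℚ :=
  Sum.elim (fun p => Pi.single p 1)
    (Sum.elim (fun p => Pi.single p 1 - Pi.single (p.2, p.1) 1)
      (fun q => if IsCut0 n q.1.1 (cutOf q.2) then chi (cutOf q.2) - chi (cutOf (σ q.1)) else 0))

lemma dotQ_single' {ι : Type} [Fintype ι] [DecidableEq ι] (t : ι) (x : ι → ℝ) :
    dotQ (Pi.single t (1:ℚ)) x = x t := by
  simp [dotQ, Pi.single_apply, apply_ite (fun q : ℚ => (q : ℝ)), ite_mul,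
    Finset.sum_ite_eq, Finset.mem_univ]

lemma dotQ_sub_coeff {ι : Type} [Fintype ι] (a b : ι → ℚ) (x : ι → ℝ) :
    dotQ (a - b) x = dotQ a x - dotQ b x := by
  unfold dotQ
  rw [← Finset.sum_sub_distrib]
  refine Finset.sum_congr rfl fun t _ => ?_
  push_cast [Pi.sub_apply]
  ring

lemma rows_nonneg {σ : SelT n} {ρ : V0 n × V0 n → ℝ} (hρ : ρ ∈ hSet (rowsCells σ)) :
    ∀ p, 0 ≤ ρ p := by
  intro p
  have h := hρ (Sum.inl p)
  rwa [show rowsCells σ (Sum.inl p) = Pi.single p 1 from rfl, dotQ_single'] at h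

lemma rows_symm {σ : SelT n} {ρ : V0 n × V0 n → ℝ} (hρ : ρ ∈ hSet (rowsCells σ)) :
    ∀ u v, ρ (u, v) = ρ (v, u) := by
  intro u v
  have h1 := hρ (Sum.inr (Sum.inl (u, v)))
  have h2 := hρ (Sum.inr (Sum.inl (v, u)))
  rw [show rowsCells σ (Sum.inr (Sum.inl (u, v)))
      = Pi.single (u, v) 1 - Pi.single (v, u) 1 from rfl,
    dotQ_sub_coeff, dotQ_single', dotQ_single'] at h1
  rw [show rowsCells σ (Sum.inr (Sum.inl (v, u)))
      = Pi.single (v, u) 1 - Pi.single (u, v) 1 from rfl,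
    dotQ_sub_coeff, dotQ_single', dotQ_single'] at h2
  linarith

lemma rows_min {σ : SelT n} {ρ : V0 n × V0 n → ℝ} (hρ : ρ ∈ hSet (rowsCells σ))
    (I : {I : Finset (Fin n) // I.Nonempty}) (W : Set (V0 n)) (hW : IsCut0 n I.1 W) :
    dotQ (chi (cutOf (σ I))) ρ ≤ dotQ (chi W) ρ := by
  set s : V0 n → Bool := fun v => if v ∈ W then true else false with hs'
  have hs : cutOf s = W := by
    ext v
    by_cases hv : v ∈ W <;> simp [cutOf, hs', hv]
  have h := hρ (Sum.inr (Sum.inr (I, s)))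
  rw [show rowsCells σ (Sum.inr (Sum.inr (I, s)))
      = (if IsCut0 n I.1 (cutOf s) then chi (cutOf s) - chi (cutOf (σ I)) else 0) from rfl] at h
  rw [hs] at h
  rw [if_pos hW, dotQ_sub_coeff] at h
  linarith

lemma model_entropy_eq (w : V0 n → V0 n → ℝ) (hsym : ∀ u v, w u v = w v u)
    (hnn : ∀ u v, 0 ≤ w u v) (ρ : V0 n × V0 n → ℝ) (hwρ : ∀ u v, w u v = ρ (u, v))
    (σ : SelT n) (hval : ∀ I : {I : Finset (Fin n) // I.Nonempty}, IsCut0 n I.1 (cutOf (σ I)))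
    (hρ : ρ ∈ hSet (rowsCells σ)) :
    (mkModel w hsym hnn).entropyVector = fun I => dotQ (chi (cutOf (σ I))) ρ := by
  funext I
  obtain ⟨W0, hW0, hW0eq, hW0min⟩ := (mkModel w hsym hnn).exists_min_cut I.1
  show (mkModel w hsym hnn).entropy I.1 = _
  apply le_antisymm
  · calc (mkModel w hsym hnn).entropy I.1
        ≤ (mkModel w hsym hnn).cutWeight (cutOf (σ I)) :=
          hW0min _ ((isCut_mkModel w hsym hnn I.1 _).2 (hval I))
      _ = dotQ (chi (cutOf (σ I))) ρ := cutWeight_eq_dot w hsym hnn ρ hwρ _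
  · rw [← hW0eq, cutWeight_eq_dot w hsym hnn ρ hwρ W0]
    exact rows_min hρ I W0 ((isCut_mkModel w hsym hnn I.1 W0).1 hW0)

lemma exists_cell (G : GraphModel n) :
    ∃ (σ : SelT n) (_ : ∀ I : {I : Finset (Fin n) // I.Nonempty}, IsCut0 n I.1 (cutOf (σ I)))
      (ρ : V0 n × V0 n → ℝ),
      ρ ∈ hSet (rowsCells σ) ∧ G.entropyVector = fun I => dotQ (chi (cutOf (σ I))) ρ := by
  obtain ⟨w, hsym, hnn, hGw⟩ := reduction G
  set G' := mkModel w hsym hnn with hG'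
  choose U hU hUeq hUmin using
    fun I : {I : Finset (Fin n) // I.Nonempty} => G'.exists_min_cut I.1
  set σ : SelT n := fun I => fun v => if v ∈ U I then true else false with hσ
  have hcutOf : ∀ I, cutOf (σ I) = U I := by
    intro I
    ext v
    by_cases hv : v ∈ U I <;> simp [cutOf, hσ, hv] <;> exact hv
  have hval : ∀ I : {I : Finset (Fin n) // I.Nonempty}, IsCut0 n I.1 (cutOf (σ I)) := by
    intro I
    rw [hcutOf]
    exact (isCut_mkModel w hsym hnn I.1 (U I)).1 (hU I)
  set ρ : V0 n × V0 n → ℝ := fun p => w p.1 p.2 with hρdef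
  have hwρ : ∀ u v, w u v = ρ (u, v) := fun u v => rfl
  have hmem : ρ ∈ hSet (rowsCells σ) := by
    rintro (p | (p | q))
    · rw [show rowsCells σ (Sum.inl p) = Pi.single p 1 from rfl, dotQ_single']
      exact hnn p.1 p.2
    · rw [show rowsCells σ (Sum.inr (Sum.inl p))
          = Pi.single p 1 - Pi.single (p.2, p.1) 1 from rfl,
        dotQ_sub_coeff, dotQ_single', dotQ_single']
      have := hsym p.1 p.2
      show (0:ℝ) ≤ w p.1 p.2 - w p.2 p.1
      linarith
    · rw [show rowsCells σ (Sum.inr (Sum.inr q))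
          = (if IsCut0 n q.1.1 (cutOf q.2) then chi (cutOf q.2) - chi (cutOf (σ q.1)) else 0)
          from rfl]
      by_cases hc : IsCut0 n q.1.1 (cutOf q.2)
      · rw [if_pos hc, dotQ_sub_coeff]
        have h1 : dotQ (chi (cutOf q.2)) ρ = G'.cutWeight (cutOf q.2) :=
          (cutWeight_eq_dot w hsym hnn ρ hwρ _).symm
        have h2 : dotQ (chi (cutOf (σ q.1))) ρ = G'.cutWeight (U q.1) := by
          rw [hcutOf]
          exact (cutWeight_eq_dot w hsym hnn ρ hwρ _).symm
        have h3 := hUmin q.1 (cutOf q.2) ((isCut_mkModel w hsym hnn q.1.1 _).2 hc)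
        have h4 := hUeq q.1
        rw [h1, h2]
        linarith
      · rw [if_neg hc, dotQ_zero_coeff]
  refine ⟨σ, hval, ρ, hmem, ?_⟩
  rw [← hGw]
  exact model_entropy_eq w hsym hnn ρ hwρ σ hval hmem

lemma coneSet_subfamily {ι : Type} [Fintype ι] {κ₁ κ : Type} [Fintype κ₁] [Fintype κ]
    (e : κ₁ → κ) (he : Function.Injective e) (H : κ → ι → ℚ) {x : ι → ℝ}
    (hx : x ∈ coneSet (H ∘ e)) : x ∈ coneSet H := by
  obtain ⟨lam, hlam, rfl⟩ := hx
  refine ⟨fun k => if hk : ∃ j, e j = k then lam hk.choose else 0, fun k => ?_, ?_⟩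
  · dsimp only
    split
    · exact hlam _
    · exact le_refl 0
  · have hvan : ∀ k ∈ Finset.univ, k ∉ Finset.univ.image e →
        (if hk : ∃ j, e j = k then lam hk.choose else 0) • (fun t => ((H k t : ℝ))) = 0 := by
      intro k _ hk
      rw [dif_neg]
      · exact zero_smul ℝ _
      · rintro ⟨j, rfl⟩
        exact hk (Finset.mem_image_of_mem e (Finset.mem_univ j))
    rw [← Finset.sum_subset (Finset.subset_univ (Finset.univ.image e)) hvan]
    rw [Finset.sum_image (fun a _ b _ h => he h)]
    refine Finset.sum_congr rfl fun j _ => ?_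
    have hj : ∃ j', e j' = e j := ⟨j, rfl⟩
    rw [dif_pos hj]
    have heq : hj.choose = j := he hj.choose_spec
    rw [heq]
    rfl

end Cells

/-- The holographic entropy cone `C_n` (the set of entropy vectors of
graph models on `n` regions) is a rational polyhedral convex cone: it is the set of
nonnegative combinations of finitely many rational vectors.  In particular it is closed
and is cut out by finitely many homogeneous linear inequalities with integer
coefficients. -/
theorem stmt2 (n : ℕ) (hn : 1 ≤ n) :
    ∃ (m : ℕ) (v : Fin m → ({I : Finset (Fin n) // I.Nonempty} → ℝ)),
      (∀ j I, ∃ q : ℚ, v j I = (q : ℝ)) ∧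
      ({s | ∃ G : GraphModel n, G.entropyVector = s}
        = {s | ∃ lam : Fin m → ℝ, (∀ j, 0 ≤ lam j) ∧ s = ∑ j, lam j • v j}) ∧
      IsClosed {s | ∃ G : GraphModel n, G.entropyVector = s} ∧
      ∃ (M : ℕ) (c : Fin M → ({I : Finset (Fin n) // I.Nonempty} → ℤ)),
        {s | ∃ G : GraphModel n, G.entropyVector = s}
          = {s : {I : Finset (Fin n) // I.Nonempty} → ℝ |
              ∀ m', 0 ≤ ∑ I, (c m' I : ℝ) * s I} := by
  classical
  have hgenex : ∀ σ : SelT n, ∃ (m : ℕ) (g : Fin m → (V0 n × V0 n) → ℚ),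
      hSet (rowsCells σ) = coneSet g := by
    intro σ
    obtain ⟨M, a, ha⟩ := hSet_toFin (rowsCells σ)
    obtain ⟨m, g, hg⟩ := minkowski M a
    exact ⟨m, g, ha.trans hg⟩
  choose mg gg hgg using hgenex
  haveI : DecidablePred (fun σ : SelT n =>
      ∀ I : {I : Finset (Fin n) // I.Nonempty}, IsCut0 n I.1 (cutOf (σ I))) :=
    Classical.decPred _
  set vq : (Σ σ : {σ : SelT n //
        ∀ I : {I : Finset (Fin n) // I.Nonempty}, IsCut0 n I.1 (cutOf (σ I))}, Fin (mg σ.1))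
      → ({I : Finset (Fin n) // I.Nonempty} → ℚ) :=
    fun s I => ∑ p, chi (cutOf (s.1.1 I)) p * gg s.1.1 s.2 p with hvqdef
  have hC : {s | ∃ G : GraphModel n, G.entropyVector = s} = coneSet vq := by
    ext x
    constructor
    · rintro ⟨G, rfl⟩
      obtain ⟨σ, hval, ρ, hρ, hvec⟩ := exists_cell G
      rw [hgg σ] at hρ
      obtain ⟨lam, hlam, hρeq⟩ := hρ
      refine coneSet_subfamily (Sigma.mk (⟨σ, hval⟩ : {σ : SelT n //
        ∀ I : {I : Finset (Fin n) // I.Nonempty}, IsCut0 n I.1 (cutOf (σ I))}))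
        sigma_mk_injective vq ?_
      refine ⟨lam, hlam, ?_⟩
      rw [hvec]
      funext I
      rw [hρeq, dotQ_sum, Finset.sum_apply]
      refine Finset.sum_congr rfl fun j _ => ?_
      rw [dotQ_smul, dotQ_coe]
      rfl
    · rintro ⟨lam, hlam, rfl⟩
      have hgens : ∀ s : (Σ σ : {σ : SelT n //
            ∀ I : {I : Finset (Fin n) // I.Nonempty}, IsCut0 n I.1 (cutOf (σ I))}, Fin (mg σ.1)),
          ∃ G : GraphModel n, G.entropyVector = fun I => ((vq s I : ℝ)) := by
        rintro ⟨⟨σ, hval⟩, j⟩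
        have hρ : (fun p => ((gg σ j p : ℝ))) ∈ hSet (rowsCells σ) := by
          rw [hgg σ]
          exact coneSet_gen_mem (gg σ) j
        have hsymρ : ∀ u v : V0 n, ((gg σ j (u, v) : ℝ)) = ((gg σ j (v, u) : ℝ)) :=
          fun u v => rows_symm hρ u v
        have hnnρ : ∀ u v : V0 n, (0:ℝ) ≤ ((gg σ j (u, v) : ℝ)) :=
          fun u v => rows_nonneg hρ (u, v)
        refine ⟨mkModel (fun u v => ((gg σ j (u, v) : ℝ))) hsymρ hnnρ, ?_⟩
        rw [model_entropy_eq (fun u v => ((gg σ j (u, v) : ℝ))) hsymρ hnnρ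
          (fun p => ((gg σ j p : ℝ))) (fun u v => rfl) σ hval hρ]
        funext I
        rw [dotQ_coe]
      exact entropy_cone_sum lam hlam _ hgens
  obtain ⟨mm, gq, hgq⟩ := coneSet_toFin vq
  obtain ⟨M, b, hb⟩ := weyl gq
  obtain ⟨cz, hcz⟩ := hSet_to_int b
  refine ⟨mm, fun j => fun I => ((gq j I : ℝ)), fun j I => ⟨gq j I, rfl⟩, ?_, ?_, ?_⟩
  · rw [hC, hgq]
    rfl
  · rw [hC, hgq, hb, hcz]
    have hint : {x : {I : Finset (Fin n) // I.Nonempty} → ℝ | ∀ i, 0 ≤ ∑ t, ((cz i t : ℝ)) * x t}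
        = ⋂ i, {x : {I : Finset (Fin n) // I.Nonempty} → ℝ | 0 ≤ ∑ t, ((cz i t : ℝ)) * x t} := by
      ext x
      simp only [Set.mem_setOf_eq, Set.mem_iInter]
    rw [hint]
    exact isClosed_iInter fun i => isClosed_le continuous_const
      (continuous_finset_sum _ fun t _ => continuous_const.mul (continuous_apply t))
  · exact ⟨M, cz, by rw [hC, hgq, hb, hcz]⟩
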